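/- Let A = (Q, ι, δ, F) be an NBA over a finite alphabet Σ, let w : ℕ → Σ be an infinite word, and consider the sequence (P_ℓ, O_ℓ) of the inherently-weak-SCC construction. If there exists k ∈ ℕ such that O_ℓ ≠ ∅ for all ℓ ≥ k, then there exists a run ρ of A over w with ρ(ℓ) ∈ O_ℓ for all ℓ ≥ k; moreover any such run eventually stays in an accepting inherently weak SCC and is accepting. -/
import Mathlib


open scoped Classical

/-- A nondeterministic Büchi automaton with state type `Q` and alphabet `A`:
an initial state, a transition relation (given as `trans : Q → A → Set Q`),
and a set `acc` of accepting transitions, which must be transitions of the automaton. -/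
structure NBA (Q A : Type) where
  init : Q
  trans : Q → A → Set Q
  acc : Set (Q × A × Q)
  acc_sub : ∀ t ∈ acc, t.2.2 ∈ trans t.1 t.2.1

namespace NBA

variable {Q A : Type}

/-- `ρ` is a run of the NBA `M` over the infinite word `w`. -/
def IsRun (M : NBA Q A) (w : ℕ → A) (ρ : ℕ → Q) : Prop :=
  ρ 0 = M.init ∧ ∀ ℓ : ℕ, ρ (ℓ + 1) ∈ M.trans (ρ ℓ) (w ℓ)

/-- `ρ` is an accepting run of `M` over `w`: a run taking accepting transitions
infinitely often. -/
def IsAcceptingRun (M : NBA Q A) (w : ℕ → A) (ρ : ℕ → Q) : Prop :=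
  M.IsRun w ρ ∧ ∀ n : ℕ, ∃ ℓ ≥ n, (ρ ℓ, w ℓ, ρ (ℓ + 1)) ∈ M.acc

/-- `w` is in the language of `M`. -/
def InLanguage (M : NBA Q A) (w : ℕ → A) : Prop :=
  ∃ ρ : ℕ → Q, M.IsAcceptingRun w ρ

/-- `q'` is reachable from `q` (via a finite, possibly empty, word). -/
def Reach (M : NBA Q A) : Q → Q → Prop :=
  Relation.ReflTransGen fun q q' => ∃ a : A, q' ∈ M.trans q a

/-- `C` is a strongly connected component: any two of its states are mutually
reachable, and it is maximal with this property. -/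
def IsSCC (M : NBA Q A) (C : Set Q) : Prop :=
  (∀ q ∈ C, ∀ q' ∈ C, M.Reach q q' ∧ M.Reach q' q) ∧
  ∀ C' : Set Q, C ⊆ C' → (∀ q ∈ C', ∀ q' ∈ C', M.Reach q q' ∧ M.Reach q' q) → C' = C

/-- An SCC is accepting if it contains an accepting transition. -/
def AccSCC (M : NBA Q A) (C : Set Q) : Prop :=
  ∃ q ∈ C, ∃ a : A, ∃ q' ∈ C, (q, a, q') ∈ M.acc

/-- A cycle through `C`: a nonempty finite sequence of transitions within
`C × A × C` starting and ending at the same state. -/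
def IsCycle (M : NBA Q A) (C : Set Q) (n : ℕ) (p : ℕ → Q) (u : ℕ → A) : Prop :=
  1 ≤ n ∧ p n = p 0 ∧ ∀ i < n, p i ∈ C ∧ p (i + 1) ∈ C ∧ p (i + 1) ∈ M.trans (p i) (u i)

/-- The cycle visits an accepting transition. -/
def CycleHasAcc (M : NBA Q A) (n : ℕ) (p : ℕ → Q) (u : ℕ → A) : Prop :=
  ∃ i < n, (p i, u i, p (i + 1)) ∈ M.acc

/-- `C` is inherently weak: either every cycle through `C` contains an accepting
transition, or no cycle through `C` does. -/
def InherentlyWeak (M : NBA Q A) (C : Set Q) : Prop :=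
  (∀ n p u, M.IsCycle C n p u → M.CycleHasAcc n p u) ∨
  (∀ n p u, M.IsCycle C n p u → ¬ M.CycleHasAcc n p u)

/-- `δ(S, a)`, the set of successors of states of `S` under letter `a`. -/
def stepSet (M : NBA Q A) (S : Set Q) (a : A) : Set Q :=
  {q' | ∃ q ∈ S, q' ∈ M.trans q a}

/-- `S_ℓ`: the set of states reached at level `ℓ` of the run DAG of `M` over `w`. -/
def reachSet (M : NBA Q A) (w : ℕ → A) : ℕ → Set Q
  | 0 => {M.init}
  | ℓ + 1 => M.stepSet (M.reachSet w ℓ) (w ℓ)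

/-- `W`: the union of the inherently weak SCCs. -/
def weakStates (M : NBA Q A) : Set Q :=
  {q | ∃ C : Set Q, M.IsSCC C ∧ M.InherentlyWeak C ∧ q ∈ C}

/-- `WA`: the union of the accepting inherently weak SCCs. -/
def weakAccStates (M : NBA Q A) : Set Q :=
  {q | ∃ C : Set Q, M.IsSCC C ∧ M.InherentlyWeak C ∧ M.AccSCC C ∧ q ∈ C}

/-- The sequence `(P_ℓ, O_ℓ)` of the inherently-weak-SCC construction of `M` over `w`. -/
noncomputable def weakSeq (M : NBA Q A) (w : ℕ → A) : ℕ → Set Q × Set Q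
  | 0 => ({M.init} ∩ M.weakStates, ∅)
  | ℓ + 1 =>
      (M.reachSet w (ℓ + 1) ∩ M.weakStates,
        if (M.weakSeq w ℓ).2 = ∅ then
          (M.reachSet w (ℓ + 1) ∩ M.weakStates) ∩ M.weakAccStates
        else M.stepSet (M.weakSeq w ℓ).2 (w ℓ) ∩ M.weakAccStates)

end NBA
section Aux

open NBA

variable {Q A : Type}

lemma O_subset (M : NBA Q A) (w : ℕ → A) :
    ∀ ℓ, (M.weakSeq w ℓ).2 ⊆ M.reachSet w ℓ ∩ M.weakAccStates := by
  intro ℓ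
  induction ℓ with
  | zero => simp [NBA.weakSeq]
  | succ n ih =>
    show (M.weakSeq w (n + 1)).2 ⊆ _
    rw [NBA.weakSeq]
    dsimp only
    split
    · intro q hq
      exact ⟨hq.1.1, hq.2⟩
    · intro q hq
      refine ⟨?_, hq.2⟩
      obtain ⟨q0, hq0, ht⟩ := hq.1
      exact ⟨q0, (ih hq0).1, ht⟩

lemma O_succ (M : NBA Q A) (w : ℕ → A) (ℓ : ℕ) (h : (M.weakSeq w ℓ).2 ≠ ∅) :
    (M.weakSeq w (ℓ + 1)).2 = M.stepSet (M.weakSeq w ℓ).2 (w ℓ) ∩ M.weakAccStates := by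
  rw [NBA.weakSeq]
  simp [h]

lemma reachSet_run (M : NBA Q A) (w : ℕ → A) :
    ∀ n, ∀ q ∈ M.reachSet w n, ∃ p : ℕ → Q, p 0 = M.init ∧ p n = q ∧
      ∀ i < n, p (i + 1) ∈ M.trans (p i) (w i) := by
  intro n
  induction n with
  | zero =>
    intro q hq
    rw [NBA.reachSet, Set.mem_singleton_iff] at hq
    exact ⟨fun _ => M.init, rfl, hq.symm, fun i h => absurd h (by omega)⟩
  | succ n ih =>
    intro q hq
    obtain ⟨q0, hq0, ht⟩ := hq
    obtain ⟨p, h0, hn, hs⟩ := ih q0 hq0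
    refine ⟨fun i => if i = n + 1 then q else p i, by simp [h0], by simp, ?_⟩
    intro i hi
    by_cases h : i = n
    · subst h
      simp only [if_pos rfl, if_neg (by omega : ¬ i = i + 1), hn]
      exact ht
    · simp only [if_neg (by omega : ¬ i + 1 = n + 1), if_neg (by omega : ¬ i = n + 1)]
      exact hs i (by omega)

/-- A forward path of length `n` from `q` staying in the `O`-sets from level `ℓ` on. -/
def PathO (M : NBA Q A) (w : ℕ → A) (ℓ : ℕ) (q : Q) (n : ℕ) : Prop :=
  ∃ p : ℕ → Q, p 0 = q ∧ (∀ i ≤ n, p i ∈ (M.weakSeq w (ℓ + i)).2) ∧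
    ∀ i < n, p (i + 1) ∈ M.trans (p i) (w (ℓ + i))

lemma PathO_mono {M : NBA Q A} {w : ℕ → A} {ℓ : ℕ} {q : Q} {m n : ℕ}
    (h : PathO M w ℓ q n) (hmn : m ≤ n) : PathO M w ℓ q m := by
  obtain ⟨p, h0, hO, ht⟩ := h
  exact ⟨p, h0, fun i hi => hO i (hi.trans hmn), fun i hi => ht i (lt_of_lt_of_le hi hmn)⟩

lemma back (M : NBA Q A) (w : ℕ → A) (k : ℕ)
    (hk : ∀ ℓ ≥ k, (M.weakSeq w ℓ).2 ≠ ∅) :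
    ∀ n, ∀ q ∈ (M.weakSeq w (k + n)).2, ∃ p : ℕ → Q,
      p n = q ∧ (∀ i ≤ n, p i ∈ (M.weakSeq w (k + i)).2) ∧
      ∀ i < n, p (i + 1) ∈ M.trans (p i) (w (k + i)) := by
  intro n
  induction n with
  | zero =>
    intro q hq
    exact ⟨fun _ => q, rfl, fun i hi => by interval_cases i; exact hq,
      fun i hi => absurd hi (by omega)⟩
  | succ n ih =>
    intro q hq
    have hq' := hq
    rw [show k + (n + 1) = (k + n) + 1 from rfl,
      O_succ M w (k + n) (hk _ (by omega))] at hq'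
    obtain ⟨⟨q1, hq1, htr⟩, _⟩ := hq'
    obtain ⟨p, hpn, hpO, hpt⟩ := ih q1 hq1
    refine ⟨fun i => if i = n + 1 then q else p i, by simp, ?_, ?_⟩
    · intro i hi
      by_cases h' : i = n + 1
      · subst h'
        simpa using hq
      · simp only [if_neg h']
        exact hpO i (by omega)
    · intro i hi
      by_cases h' : i = n
      · subst h'
        simp only [if_pos rfl, if_neg (by omega : ¬ i = i + 1), hpn]
        exact htr
      · simp only [if_neg (by omega : ¬ i + 1 = n + 1), if_neg (by omega : ¬ i = n + 1)]
        exact hpt i (by omega)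

lemma exists_good (M : NBA Q A) [Finite Q] (w : ℕ → A) (k : ℕ)
    (hk : ∀ ℓ ≥ k, (M.weakSeq w ℓ).2 ≠ ∅) :
    ∃ q, q ∈ (M.weakSeq w k).2 ∧ ∀ n, PathO M w k q n := by
  have H : ∀ n, ∃ q0, q0 ∈ (M.weakSeq w k).2 ∧ PathO M w k q0 n := by
    intro n
    obtain ⟨q, hq⟩ := Set.nonempty_iff_ne_empty.mpr (hk (k + n) (by omega))
    obtain ⟨p, hpn, hpO, hpt⟩ := back M w k hk n q hq
    exact ⟨p 0, by simpa using hpO 0 (by omega), p, rfl, hpO, hpt⟩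
  choose f hf1 hf2 using H
  obtain ⟨q, hq0⟩ := Finite.exists_infinite_fiber f
  have hq : (f ⁻¹' {q}).Infinite := Set.infinite_coe_iff.mp hq0
  obtain ⟨m0, hm0⟩ := hq.nonempty
  refine ⟨q, ?_, ?_⟩
  · rw [← hm0]
    exact hf1 m0
  · intro n
    obtain ⟨m, hmS, hmn⟩ := hq.exists_gt n
    have : f m = q := hmS
    rw [← this]
    exact PathO_mono (hf2 m) (le_of_lt hmn)

lemma good_step (M : NBA Q A) [Finite Q] (w : ℕ → A) (ℓ : ℕ) (q : Q)
    (hgood : ∀ n, PathO M w ℓ q n) :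
    ∃ q', q' ∈ M.trans q (w ℓ) ∧ q' ∈ (M.weakSeq w (ℓ + 1)).2 ∧
      ∀ n, PathO M w (ℓ + 1) q' n := by
  have H : ∀ n, ∃ q', q' ∈ M.trans q (w ℓ) ∧ q' ∈ (M.weakSeq w (ℓ + 1)).2 ∧
      PathO M w (ℓ + 1) q' n := by
    intro n
    obtain ⟨p, hp0, hpO, hpt⟩ := hgood (n + 1)
    refine ⟨p 1, ?_, by simpa using hpO 1 (by omega), fun i => p (i + 1), rfl, ?_, ?_⟩
    · have := hpt 0 (by omega)
      rw [hp0] at this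
      simpa using this
    · intro i hi
      have h' := hpO (i + 1) (by omega)
      rwa [show ℓ + (i + 1) = ℓ + 1 + i by omega] at h'
    · intro i hi
      have h' := hpt (i + 1) (by omega)
      rwa [show ℓ + (i + 1) = ℓ + 1 + i by omega] at h'
  choose f hf1 hf2 hf3 using H
  obtain ⟨q', hq'0⟩ := Finite.exists_infinite_fiber f
  have hq' : (f ⁻¹' {q'}).Infinite := Set.infinite_coe_iff.mp hq'0
  obtain ⟨m0, hm0⟩ := hq'.nonempty
  refine ⟨q', by rw [← hm0]; exact hf1 m0, by rw [← hm0]; exact hf2 m0, ?_⟩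
  intro n
  obtain ⟨m, hmS, hmn⟩ := hq'.exists_gt n
  have : f m = q' := hmS
  rw [← this]
  exact PathO_mono (hf3 m) (le_of_lt hmn)

lemma dep_choice {α : Type} (G : ℕ → α → Prop) (R : ℕ → α → α → Prop)
    (h0 : ∃ q, G 0 q) (hs : ∀ n q, G n q → ∃ q', R n q q' ∧ G (n + 1) q') :
    ∃ σ : ℕ → α, (∀ n, G n (σ n)) ∧ ∀ n, R n (σ n) (σ (n + 1)) := by
  choose f hf1 hf2 using hs
  let F : (n : ℕ) → {q // G n q} := fun n =>
    Nat.rec ⟨h0.choose, h0.choose_spec⟩ (fun n p => ⟨f n p.1 p.2, hf2 n p.1 p.2⟩) n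
  exact ⟨fun n => (F n).1, fun n => (F n).2, fun n => hf1 n (F n).1 (F n).2⟩

lemma run_reach (M : NBA Q A) (w : ℕ → A) (ρ : ℕ → Q) (h : M.IsRun w ρ) :
    ∀ m n, m ≤ n → M.Reach (ρ m) (ρ n) := by
  intro m n hmn
  induction n, hmn using Nat.le_induction with
  | base => exact Relation.ReflTransGen.refl
  | succ n hmn ih => exact ih.tail ⟨w n, h.2 n⟩

lemma mem_scc_of_reach (M : NBA Q A) {C : Set Q} {q r : Q} (hC : M.IsSCC C)
    (hq : q ∈ C) (h1 : M.Reach q r) (h2 : M.Reach r q) : r ∈ C := by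
  have key : ∀ z ∈ C ∪ {r}, M.Reach q z ∧ M.Reach z q := by
    intro z hz
    rcases hz with hz | hz
    · exact hC.1 q hq z hz
    · rcases hz with rfl
      exact ⟨h1, h2⟩
  have : C ∪ {r} = C := by
    apply hC.2 (C ∪ {r}) Set.subset_union_left
    intro x hx y hy
    obtain ⟨hx1, hx2⟩ := key x hx
    obtain ⟨hy1, hy2⟩ := key y hy
    exact ⟨hx2.trans hy1, hy2.trans hx1⟩
  rw [← this]
  exact Or.inr rfl

lemma reach_path (M : NBA Q A) (a₀ : A) {x y : Q} (h : M.Reach x y) :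
    ∃ n, ∃ p : ℕ → Q, ∃ u : ℕ → A, p 0 = x ∧ p n = y ∧
      (∀ i < n, p (i + 1) ∈ M.trans (p i) (u i)) ∧
      ∀ i ≤ n, M.Reach x (p i) ∧ M.Reach (p i) y := by
  induction h with
  | refl =>
    exact ⟨0, fun _ => x, fun _ => a₀, rfl, rfl, fun i hi => absurd hi (by omega),
      fun i _ => ⟨Relation.ReflTransGen.refl, Relation.ReflTransGen.refl⟩⟩
  | @tail b c hxb hbc ih =>
    obtain ⟨n, p, u, hp0, hpn, hpt, hpr⟩ := ih
    obtain ⟨a, hc⟩ := hbc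
    refine ⟨n + 1, fun i => if i = n + 1 then c else p i,
      fun i => if i = n then a else u i, by simp [hp0], by simp, ?_, ?_⟩
    · intro i hi
      by_cases h' : i = n
      · subst h'
        simp only [if_pos rfl, if_neg (by omega : ¬ i = i + 1), hpn]
        exact hc
      · simp only [if_neg (by omega : ¬ i + 1 = n + 1), if_neg (by omega : ¬ i = n + 1),
          if_neg h']
        exact hpt i (by omega)
    · intro i hi
      by_cases h' : i = n + 1
      · subst h'
        simp only [if_pos rfl]
        refine ⟨?_, Relation.ReflTransGen.refl⟩
        have := (hpr n (by omega)).1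
        rw [hpn] at this
        exact this.tail ⟨a, hc⟩
      · simp only [if_neg h']
        obtain ⟨r1, r2⟩ := hpr i (by omega)
        refine ⟨r1, r2.tail ⟨a, hc⟩⟩

lemma acc_scc_all_cycles (M : NBA Q A) {C : Set Q} (hSCC : M.IsSCC C)
    (hW : M.InherentlyWeak C) (hA : M.AccSCC C) :
    ∀ n p u, M.IsCycle C n p u → M.CycleHasAcc n p u := by
  rcases hW with h | h
  · exact h
  · exfalso
    obtain ⟨q0, hq0, a, q1, hq1, hacc⟩ := hA
    have htr : q1 ∈ M.trans q0 a := M.acc_sub _ hacc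
    have hr : M.Reach q1 q0 := (hSCC.1 q1 hq1 q0 hq0).1
    obtain ⟨n, p, u, hp0, hpn, hpt, hpr⟩ := reach_path M a hr
    have hpC : ∀ i ≤ n, p i ∈ C := by
      intro i hi
      have h1 : M.Reach q1 (p i) := (hpr i hi).1
      have h2 : M.Reach (p i) q1 :=
        ((hpr i hi).2).tail ⟨a, htr⟩
      exact mem_scc_of_reach M hSCC hq1 h1 h2
    set P : ℕ → Q := fun j => if j ≤ n then p j else q1 with hP
    set U : ℕ → A := fun j => if j < n then u j else a with hU
    have hPn1 : P (n + 1) = q1 := by simp [hP]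
    have hP0 : P 0 = q1 := by simp [hP, hp0]
    have hcyc : M.IsCycle C (n + 1) P U := by
      refine ⟨by omega, by rw [hPn1, hP0], ?_⟩
      intro i hi
      by_cases h' : i < n
      · have e1 : P i = p i := by simp [hP, (by omega : i ≤ n)]
        have e2 : P (i + 1) = p (i + 1) := by simp [hP, (by omega : i + 1 ≤ n)]
        have e3 : U i = u i := by simp [hU, h']
        rw [e1, e2, e3]
        exact ⟨hpC i (by omega), hpC (i + 1) (by omega), hpt i h'⟩
      · have : i = n := by omega
        subst this
        have e1 : P i = p i := by simp [hP]
        have e2 : P (i + 1) = q1 := hPn1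
        have e3 : U i = a := by simp [hU]
        rw [e1, e2, e3, hpn]
        exact ⟨by rw [← hpn]; exact hpC i le_rfl, hq1, htr⟩
    refine h (n + 1) P U hcyc ⟨n, by omega, ?_⟩
    have e1 : P n = p n := by simp [hP]
    have e3 : U n = a := by simp [hU]
    rw [e1, e3, hPn1, hpn]
    exact hacc

end Aux

/-- If from level `k` on the `O`-sets of the inherently-weak-SCC
construction are never empty, then there is a run `ρ` of `M` over `w` with
`ρ ℓ ∈ O_ℓ` for all `ℓ ≥ k`; moreover any such run eventually stays in an
accepting inherently weak SCC, and is accepting. -/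
theorem iwc_nonempty_O_gives_accepting_run {Q A : Type} [Finite Q] [Finite A]
    (M : NBA Q A) (w : ℕ → A) (k : ℕ) (hk : ∀ ℓ ≥ k, (M.weakSeq w ℓ).2 ≠ ∅) :
    (∃ ρ : ℕ → Q, M.IsRun w ρ ∧ ∀ ℓ ≥ k, ρ ℓ ∈ (M.weakSeq w ℓ).2) ∧
    (∀ ρ : ℕ → Q, M.IsRun w ρ → (∀ ℓ ≥ k, ρ ℓ ∈ (M.weakSeq w ℓ).2) →
      (∃ C : Set Q, M.IsSCC C ∧ M.InherentlyWeak C ∧ M.AccSCC C ∧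
        ∃ N : ℕ, ∀ n ≥ N, ρ n ∈ C) ∧
      M.IsAcceptingRun w ρ) := by
  rcases Nat.eq_zero_or_pos k with hk0 | hkpos
  · subst hk0
    exact absurd (by rw [NBA.weakSeq]) (hk 0 le_rfl)
  constructor
  · -- existence of the run
    obtain ⟨q0, hq0O, hq0P⟩ := exists_good M w k hk
    obtain ⟨σ, hσG, hσR⟩ := dep_choice
      (fun n q => q ∈ (M.weakSeq w (k + n)).2 ∧ ∀ m, PathO M w (k + n) q m)
      (fun n q q' => q' ∈ M.trans q (w (k + n)))
      ⟨q0, hq0O, hq0P⟩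
      (fun n q hq => by
        obtain ⟨q', h1, h2, h3⟩ := good_step M w (k + n) q hq.2
        exact ⟨q', h1, h2, h3⟩)
    have hσ0 : σ 0 ∈ M.reachSet w k := (O_subset M w k (hσG 0).1).1
    obtain ⟨p, hp0, hpk, hpt⟩ := reachSet_run M w k (σ 0) hσ0
    refine ⟨fun ℓ => if ℓ < k then p ℓ else σ (ℓ - k), ⟨?_, ?_⟩, ?_⟩
    · simp only [if_pos hkpos, hp0]
    · intro ℓ
      by_cases h1 : ℓ + 1 < k
      · simp only [if_pos (by omega : ℓ < k), if_pos h1]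
        exact hpt ℓ (by omega)
      · by_cases h2 : ℓ < k
        · have hek : ℓ + 1 = k := by omega
          simp only [if_pos h2, if_neg h1]
          rw [show ℓ + 1 - k = 0 by omega, ← hpk, ← hek]
          exact hpt ℓ h2
        · simp only [if_neg h2, if_neg h1]
          have h := hσR (ℓ - k)
          rw [show ℓ + 1 - k = (ℓ - k) + 1 by omega]
          rwa [show k + (ℓ - k) = ℓ by omega] at h
    · intro ℓ hℓ
      simp only [if_neg (by omega : ¬ ℓ < k)]
      have h := (hσG (ℓ - k)).1
      rwa [show k + (ℓ - k) = ℓ by omega] at h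
  · -- any such run eventually stays in an accepting inherently weak SCC and accepts
    intro ρ hrun hO
    have hWA : ∀ ℓ ≥ k, ρ ℓ ∈ M.weakAccStates := fun ℓ hℓ => (O_subset M w ℓ (hO ℓ hℓ)).2
    obtain ⟨qs, hqs0⟩ := Finite.exists_infinite_fiber (fun n => ρ (k + n))
    have hqs : ((fun n => ρ (k + n)) ⁻¹' {qs}).Infinite := Set.infinite_coe_iff.mp hqs0
    obtain ⟨n0, hn0⟩ := hqs.nonempty
    have hn0' : ρ (k + n0) = qs := hn0
    obtain ⟨C, hSCC, hW, hAcc, hmem⟩ : qs ∈ M.weakAccStates := by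
      rw [← hn0']
      exact hWA (k + n0) (by omega)
    have hC : ∀ n ≥ k + n0, ρ n ∈ C := by
      intro n hn
      obtain ⟨m, hmS, hmn⟩ := hqs.exists_gt n
      have hm : ρ (k + m) = qs := hmS
      apply mem_scc_of_reach M hSCC hmem
      · rw [← hn0']
        exact run_reach M w ρ hrun (k + n0) n hn
      · rw [← hm]
        exact run_reach M w ρ hrun n (k + m) (by omega)
    have allAcc := acc_scc_all_cycles M hSCC hW hAcc
    refine ⟨⟨C, hSCC, hW, hAcc, k + n0, hC⟩, hrun, ?_⟩
    intro n
    set n1 := max n (k + n0) with hn1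
    have hge1 : n ≤ n1 := le_max_left _ _
    have hge2 : k + n0 ≤ n1 := le_max_right _ _
    obtain ⟨r, hr0⟩ := Finite.exists_infinite_fiber (fun m => ρ (n1 + m))
    have hr : ((fun m => ρ (n1 + m)) ⁻¹' {r}).Infinite := Set.infinite_coe_iff.mp hr0
    obtain ⟨m1, hm1⟩ := hr.nonempty
    obtain ⟨m2, hm2, hlt⟩ := hr.exists_gt m1
    have hm1' : ρ (n1 + m1) = r := hm1
    have hm2' : ρ (n1 + m2) = r := hm2
    have hcyc : M.IsCycle C (m2 - m1) (fun j => ρ (n1 + m1 + j)) (fun j => w (n1 + m1 + j)) := by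
      refine ⟨by omega, ?_, ?_⟩
      · show ρ (n1 + m1 + (m2 - m1)) = ρ (n1 + m1 + 0)
        rw [show n1 + m1 + (m2 - m1) = n1 + m2 by omega, show n1 + m1 + 0 = n1 + m1 from rfl,
          hm1', hm2']
      · intro i hi
        exact ⟨hC _ (by omega), hC _ (by omega), hrun.2 (n1 + m1 + i)⟩
    obtain ⟨i, hi, hia⟩ := allAcc _ _ _ hcyc
    exact ⟨n1 + m1 + i, by omega, hia⟩
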